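/- Let τ ∈ ℂ with Im τ > 0 and let x, y, z ∈ ℂ. Then θ₃(z+x|τ)·θ₃(z+y|τ)·θ₃(z−x−y|τ) = A(x,y|τ)·θ₃(3z|3τ) + exp(iπτ/3)·C(−x,−y|τ)·exp(2iz)·θ₃(3z+πτ|3τ) + exp(iπτ/3)·C(x,y|τ)·exp(−2iz)·θ₃(3z−πτ|3τ). -/

import Mathlib

open Complex

/-- The Jacobi theta function θ₃(z|τ). -/
noncomputable def theta3 (z τ : ℂ) : ℂ :=
  ∑' n : ℤ, Complex.exp (Real.pi * Complex.I * τ * (n : ℂ) ^ 2) *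
    Complex.exp (2 * (n : ℂ) * Complex.I * z)

/-- The theta series A(x,y|τ). -/
noncomputable def Afun (x y τ : ℂ) : ℂ :=
  ∑' k : ℤ, ∑' l : ℤ,
    Complex.exp (2 * Complex.I * Real.pi * τ * ((k : ℂ) ^ 2 + (k : ℂ) * (l : ℂ) + (l : ℂ) ^ 2)) *
    Complex.exp (2 * Complex.I * x * (2 * (l : ℂ) + (k : ℂ))) *
    Complex.exp (2 * Complex.I * y * (2 * (k : ℂ) + (l : ℂ)))

/-- The theta series C(x,y|τ). -/
noncomputable def Cfun (x y τ : ℂ) : ℂ :=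
  Complex.exp (2 * Complex.I * (x + y)) * ∑' k : ℤ, ∑' l : ℤ,
    Complex.exp (2 * Complex.I * Real.pi * τ *
      ((k : ℂ) ^ 2 + (k : ℂ) * (l : ℂ) + (l : ℂ) ^ 2 + (k : ℂ) + (l : ℂ) + 1 / 3)) *
    Complex.exp (2 * Complex.I * x * (2 * (l : ℂ) + (k : ℂ))) *
    Complex.exp (2 * Complex.I * y * (2 * (k : ℂ) + (l : ℂ)))

lemma SR1 {t : ℝ} (ht : 0 < t) (a : ℝ) : Summable fun n : ℤ => Real.exp (-t * n^2 + a*n) := by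
  refine ((summable_pow_mul_jacobiTheta₂_term_bound (|a|/(2*Real.pi)) (T := t/Real.pi)
    (by positivity) 0).of_nonneg_of_le (fun n => (Real.exp_pos _).le) (fun n => ?_))
  rw [pow_zero, one_mul, Real.exp_le_exp]
  push_cast
  have h1 : -Real.pi * (t/Real.pi * (n:ℝ)^2 - 2*(|a|/(2*Real.pi)) * |(n:ℝ)|)
      = -t*n^2 + |a| * |(n:ℝ)| := by
    field_simp
    ring
  rw [h1]
  have h2 := (abs_mul a (n:ℝ)) ▸ le_abs_self (a*(n:ℝ))
  linarith

lemma SR2 {t : ℝ} (ht : 0 < t) (a b c : ℝ) :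
    Summable fun p : ℤ×ℤ => Real.exp (-t*(p.1^2 + p.1*p.2 + p.2^2) + a*p.1 + b*p.2 + c) := by
  have h2 : 0 < t/2 := by positivity
  have hs := ((SR1 h2 a).mul_of_nonneg (SR1 h2 b)
    (fun n => (Real.exp_pos _).le) (fun n => (Real.exp_pos _).le)).mul_left (Real.exp c)
  refine hs.of_nonneg_of_le (fun p => (Real.exp_pos _).le) (fun p => ?_)
  simp only [← Real.exp_add]
  rw [Real.exp_le_exp]
  have : ((p.1:ℝ) + p.2)^2 ≥ 0 := sq_nonneg _
  nlinarith [sq_nonneg ((p.1:ℝ) + p.2)]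

noncomputable def T3 (w τ : ℂ) (n : ℤ) : ℂ :=
  Complex.exp (Real.pi * Complex.I * τ * (n : ℂ) ^ 2) * Complex.exp (2 * (n : ℂ) * Complex.I * w)

lemma norm_T3 (w τ : ℂ) (n : ℤ) :
    ‖T3 w τ n‖ = Real.exp (-Real.pi * τ.im * n^2 + (-2*w.im) * n) := by
  rw [T3, ← Complex.exp_add, Complex.norm_exp]
  congr 1
  have h : (Real.pi * Complex.I * τ * (n : ℂ) ^ 2 + 2 * (n : ℂ) * Complex.I * w)
      = ((Real.pi * (n:ℝ)^2 : ℝ) : ℂ) * (Complex.I * τ) + (((2*(n:ℝ)) : ℝ) : ℂ) * (Complex.I * w) := by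
    push_cast; ring
  rw [h, Complex.add_re, Complex.re_ofReal_mul, Complex.re_ofReal_mul]
  simp [Complex.mul_re]
  ring

lemma summable_norm_T3 {τ : ℂ} (hτ : 0 < τ.im) (w : ℂ) :
    Summable fun n : ℤ => ‖T3 w τ n‖ := by
  simp only [norm_T3]
  exact (SR1 (by positivity : (0:ℝ) < Real.pi * τ.im) (-2*w.im)).congr (fun n => by ring_nf)

noncomputable def Aterm (x y τ : ℂ) (p : ℤ×ℤ) : ℂ :=
  Complex.exp (2 * Complex.I * Real.pi * τ * ((p.1:ℂ)^2 + (p.1:ℂ)*(p.2:ℂ) + (p.2:ℂ)^2)) *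
  Complex.exp (2 * Complex.I * x * (2*(p.2:ℂ) + (p.1:ℂ))) *
  Complex.exp (2 * Complex.I * y * (2*(p.1:ℂ) + (p.2:ℂ)))

noncomputable def Cterm (x y τ : ℂ) (p : ℤ×ℤ) : ℂ :=
  Complex.exp (2 * Complex.I * Real.pi * τ *
    ((p.1:ℂ)^2 + (p.1:ℂ)*(p.2:ℂ) + (p.2:ℂ)^2 + (p.1:ℂ) + (p.2:ℂ) + 1/3)) *
  Complex.exp (2 * Complex.I * x * (2*(p.2:ℂ) + (p.1:ℂ))) *
  Complex.exp (2 * Complex.I * y * (2*(p.1:ℂ) + (p.2:ℂ)))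

lemma norm_Aterm (x y τ : ℂ) (p : ℤ×ℤ) :
    ‖Aterm x y τ p‖ = Real.exp (-(2*Real.pi*τ.im)*((p.1:ℝ)^2 + p.1*p.2 + p.2^2)
      + (-2*x.im)*(2*(p.2:ℝ)+p.1) + (-2*y.im)*(2*(p.1:ℝ)+p.2)) := by
  rw [Aterm, ← Complex.exp_add, ← Complex.exp_add, Complex.norm_exp]
  congr 1
  have h : (2 * Complex.I * Real.pi * τ * ((p.1:ℂ)^2 + (p.1:ℂ)*(p.2:ℂ) + (p.2:ℂ)^2)
      + 2 * Complex.I * x * (2*(p.2:ℂ) + (p.1:ℂ)) + 2 * Complex.I * y * (2*(p.1:ℂ) + (p.2:ℂ)))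
      = ((2*Real.pi*((p.1:ℝ)^2 + p.1*p.2 + p.2^2) : ℝ) : ℂ) * (Complex.I * τ)
      + ((2*(2*(p.2:ℝ)+p.1) : ℝ) : ℂ) * (Complex.I * x)
      + ((2*(2*(p.1:ℝ)+p.2) : ℝ) : ℂ) * (Complex.I * y) := by
    push_cast; ring
  rw [h, Complex.add_re, Complex.add_re, Complex.re_ofReal_mul, Complex.re_ofReal_mul,
    Complex.re_ofReal_mul]
  simp [Complex.mul_re]
  ring

lemma norm_Cterm (x y τ : ℂ) (p : ℤ×ℤ) :
    ‖Cterm x y τ p‖ = Real.exp (-(2*Real.pi*τ.im)*((p.1:ℝ)^2 + p.1*p.2 + p.2^2 + p.1 + p.2 + 1/3)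
      + (-2*x.im)*(2*(p.2:ℝ)+p.1) + (-2*y.im)*(2*(p.1:ℝ)+p.2)) := by
  rw [Cterm, ← Complex.exp_add, ← Complex.exp_add, Complex.norm_exp]
  congr 1
  have h : (2 * Complex.I * Real.pi * τ *
        ((p.1:ℂ)^2 + (p.1:ℂ)*(p.2:ℂ) + (p.2:ℂ)^2 + (p.1:ℂ) + (p.2:ℂ) + 1/3)
      + 2 * Complex.I * x * (2*(p.2:ℂ) + (p.1:ℂ)) + 2 * Complex.I * y * (2*(p.1:ℂ) + (p.2:ℂ)))
      = ((2*Real.pi*((p.1:ℝ)^2 + p.1*p.2 + p.2^2 + p.1 + p.2 + 1/3) : ℝ) : ℂ) * (Complex.I * τ)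
      + ((2*(2*(p.2:ℝ)+p.1) : ℝ) : ℂ) * (Complex.I * x)
      + ((2*(2*(p.1:ℝ)+p.2) : ℝ) : ℂ) * (Complex.I * y) := by
    push_cast; ring
  rw [h, Complex.add_re, Complex.add_re, Complex.re_ofReal_mul, Complex.re_ofReal_mul,
    Complex.re_ofReal_mul]
  simp [Complex.mul_re]
  ring

lemma summable_norm_Aterm {τ : ℂ} (hτ : 0 < τ.im) (x y : ℂ) :
    Summable fun p : ℤ×ℤ => ‖Aterm x y τ p‖ := by
  simp only [norm_Aterm]
  exact (SR2 (by positivity : (0:ℝ) < 2*Real.pi*τ.im)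
    (-2*x.im + -4*y.im) (-4*x.im + -2*y.im) 0).congr (fun p => by congr 1; ring)

lemma summable_norm_Cterm {τ : ℂ} (hτ : 0 < τ.im) (x y : ℂ) :
    Summable fun p : ℤ×ℤ => ‖Cterm x y τ p‖ := by
  simp only [norm_Cterm]
  exact (SR2 (by positivity : (0:ℝ) < 2*Real.pi*τ.im)
    (-(2*Real.pi*τ.im) + (-2*x.im + -4*y.im)) (-(2*Real.pi*τ.im) + (-4*x.im + -2*y.im))
    (-(2*Real.pi*τ.im)/3)).congr (fun p => by congr 1; ring)

def phi0 : ℤ×ℤ×ℤ → ℤ×ℤ×ℤ := fun q => (q.1 + q.2.2, q.1 + q.2.1, q.1 - q.2.1 - q.2.2)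
def phi1 : ℤ×ℤ×ℤ → ℤ×ℤ×ℤ := fun q => (q.1 - q.2.2, q.1 - q.2.1, q.1 + 1 + q.2.1 + q.2.2)
def phi2 : ℤ×ℤ×ℤ → ℤ×ℤ×ℤ := fun q => (q.1 + q.2.2, q.1 + q.2.1, q.1 - 1 - q.2.1 - q.2.2)

def psi (m : ℤ×ℤ×ℤ) : (Fin 3) × (ℤ×ℤ×ℤ) :=
  if (m.1 + m.2.1 + m.2.2) % 3 = 0 then
    (0, ((m.1 + m.2.1 + m.2.2)/3, m.2.1 - (m.1 + m.2.1 + m.2.2)/3,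
      m.1 - (m.1 + m.2.1 + m.2.2)/3))
  else if (m.1 + m.2.1 + m.2.2) % 3 = 1 then
    (1, ((m.1 + m.2.1 + m.2.2 - 1)/3, (m.1 + m.2.1 + m.2.2 - 1)/3 - m.2.1,
      (m.1 + m.2.1 + m.2.2 - 1)/3 - m.1))
  else
    (2, ((m.1 + m.2.1 + m.2.2 + 1)/3, m.2.1 - (m.1 + m.2.1 + m.2.2 + 1)/3,
      m.1 - (m.1 + m.2.1 + m.2.2 + 1)/3))

def trip (q : (Fin 3) × (ℤ×ℤ×ℤ)) : ℤ×ℤ×ℤ := ![phi0, phi1, phi2] q.1 q.2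

lemma trip_left : Function.LeftInverse psi trip := by
  rintro ⟨i, N, k, l⟩
  fin_cases i <;>
    unfold psi <;>
    split_ifs with h1 h2 <;>
    simp_all [trip, phi0, phi1, phi2, Prod.ext_iff, Fin.ext_iff] <;>
    omega

lemma trip_right : Function.RightInverse psi trip := by
  rintro ⟨m, n, p⟩
  unfold psi
  split_ifs with h1 h2 <;>
    simp_all [trip, Matrix.cons_val_zero, Matrix.cons_val_one, Matrix.head_cons,
      Matrix.cons_val_two, Matrix.tail_cons, phi0, phi1, phi2, Prod.ext_iff] <;>
    omega

def tripEquiv : (Fin 3) × (ℤ×ℤ×ℤ) ≃ ℤ×ℤ×ℤ := ⟨trip, psi, trip_left, trip_right⟩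

lemma pt0 (x y z τ : ℂ) (q : ℤ×ℤ×ℤ) :
    T3 (z+x) τ (phi0 q).1 * (T3 (z+y) τ (phi0 q).2.1 * T3 (z-x-y) τ (phi0 q).2.2)
      = T3 (3*z) (3*τ) q.1 * Aterm x y τ q.2 := by
  obtain ⟨N, k, l⟩ := q
  simp only [phi0, T3, Aterm, ← Complex.exp_add]
  congr 1
  push_cast
  ring

lemma pt1 (x y z τ : ℂ) (q : ℤ×ℤ×ℤ) :
    T3 (z+x) τ (phi1 q).1 * (T3 (z+y) τ (phi1 q).2.1 * T3 (z-x-y) τ (phi1 q).2.2)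
      = (Complex.exp (Real.pi * Complex.I * τ / 3) * Complex.exp (2 * Complex.I * (-x + -y)) *
          Complex.exp (2 * Complex.I * z)) *
        (T3 (3*z + Real.pi*τ) (3*τ) q.1 * Cterm (-x) (-y) τ q.2) := by
  obtain ⟨N, k, l⟩ := q
  simp only [phi1, T3, Cterm, ← Complex.exp_add]
  congr 1
  push_cast
  ring

lemma pt2 (x y z τ : ℂ) (q : ℤ×ℤ×ℤ) :
    T3 (z+x) τ (phi2 q).1 * (T3 (z+y) τ (phi2 q).2.1 * T3 (z-x-y) τ (phi2 q).2.2)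
      = (Complex.exp (Real.pi * Complex.I * τ / 3) * Complex.exp (2 * Complex.I * (x + y)) *
          Complex.exp (-2 * Complex.I * z)) *
        (T3 (3*z - Real.pi*τ) (3*τ) q.1 * Cterm x y τ q.2) := by
  obtain ⟨N, k, l⟩ := q
  simp only [phi2, T3, Cterm, ← Complex.exp_add]
  congr 1
  push_cast
  ring

lemma theta3_eq (w τ : ℂ) : theta3 w τ = ∑' n : ℤ, T3 w τ n := rfl

lemma Afun_eq {τ : ℂ} (hτ : 0 < τ.im) (x y : ℂ) :
    Afun x y τ = ∑' p : ℤ×ℤ, Aterm x y τ p :=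
  (Summable.tsum_prod (summable_norm_Aterm hτ x y).of_norm).symm

lemma Cfun_eq {τ : ℂ} (hτ : 0 < τ.im) (x y : ℂ) :
    Cfun x y τ = Complex.exp (2 * Complex.I * (x + y)) * ∑' p : ℤ×ℤ, Cterm x y τ p := by
  rw [Cfun]
  congr 1
  exact (Summable.tsum_prod (summable_norm_Cterm hτ x y).of_norm).symm

lemma trip_zero (q : ℤ×ℤ×ℤ) : tripEquiv (0, q) = phi0 q := rfl
lemma trip_one (q : ℤ×ℤ×ℤ) : tripEquiv (1, q) = phi1 q := rfl
lemma trip_two (q : ℤ×ℤ×ℤ) : tripEquiv (2, q) = phi2 q := rfl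


set_option maxHeartbeats 2000000 in
/-- Three-term theta expansion of the product `θ₃(z+x)θ₃(z+y)θ₃(z-x-y)`. -/
theorem theta3_product_expansion (τ : ℂ) (hτ : 0 < τ.im) (x y z : ℂ) :
    theta3 (z + x) τ * theta3 (z + y) τ * theta3 (z - x - y) τ
      = Afun x y τ * theta3 (3 * z) (3 * τ)
        + Complex.exp (Real.pi * Complex.I * τ / 3) * Cfun (-x) (-y) τ *
            Complex.exp (2 * Complex.I * z) * theta3 (3 * z + Real.pi * τ) (3 * τ)
        + Complex.exp (Real.pi * Complex.I * τ / 3) * Cfun x y τ *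
            Complex.exp (-2 * Complex.I * z) * theta3 (3 * z - Real.pi * τ) (3 * τ) := by
  have h3 : 0 < (3 * τ).im := by
    have : (3 * τ).im = 3 * τ.im := by simp [Complex.mul_im]
    rw [this]; linarith
  set a := z + x
  set b := z + y
  set c := z - x - y
  have sTa := summable_norm_T3 hτ a
  have sTb := summable_norm_T3 hτ b
  have sTc := summable_norm_T3 hτ c
  have sBC' : Summable fun r : ℤ×ℤ => ‖T3 b τ r.1‖ * ‖T3 c τ r.2‖ :=
    sTb.mul_of_nonneg sTc (fun n => norm_nonneg _) (fun n => norm_nonneg _)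
  have sBC : Summable fun r : ℤ×ℤ => ‖T3 b τ r.1 * T3 c τ r.2‖ := by
    simpa only [norm_mul] using sBC'
  set F : ℤ×ℤ×ℤ → ℂ := fun q => T3 a τ q.1 * (T3 b τ q.2.1 * T3 c τ q.2.2) with hF
  have sFnorm : Summable fun q : ℤ×ℤ×ℤ => ‖F q‖ := by
    simp only [hF, norm_mul]
    exact sTa.mul_of_nonneg sBC' (fun n => norm_nonneg _) (fun r => by positivity)
  have key : theta3 a τ * theta3 b τ * theta3 c τ = ∑' q : ℤ×ℤ×ℤ, F q := by
    rw [theta3_eq, theta3_eq, theta3_eq, mul_assoc,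
      tsum_mul_tsum_of_summable_norm sTb sTc,
      tsum_mul_tsum_of_summable_norm sTa sBC]
  have split : ∑' q : ℤ×ℤ×ℤ, F q
      = (∑' q : ℤ×ℤ×ℤ, F (tripEquiv (0, q))) + (∑' q : ℤ×ℤ×ℤ, F (tripEquiv (1, q)))
        + (∑' q : ℤ×ℤ×ℤ, F (tripEquiv (2, q))) := by
    rw [← tripEquiv.tsum_eq F,
      Summable.tsum_prod (f := fun p : (Fin 3) × (ℤ×ℤ×ℤ) => F (tripEquiv p))
        (tripEquiv.summable_iff.mpr sFnorm.of_norm),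
      tsum_fintype, Fin.sum_univ_three]
  have e0 : ∑' q : ℤ×ℤ×ℤ, F (tripEquiv (0, q))
      = (∑' n : ℤ, T3 (3*z) (3*τ) n) * ∑' p : ℤ×ℤ, Aterm x y τ p := by
    have step : ∑' q : ℤ×ℤ×ℤ, F (tripEquiv (0, q))
        = ∑' q : ℤ×ℤ×ℤ, T3 (3*z) (3*τ) q.1 * Aterm x y τ q.2 :=
      tsum_congr fun q => by rw [trip_zero]; exact pt0 x y z τ q
    exact step.trans (tsum_mul_tsum_of_summable_norm (summable_norm_T3 h3 (3*z))
      (summable_norm_Aterm hτ x y)).symm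
  have e1 : ∑' q : ℤ×ℤ×ℤ, F (tripEquiv (1, q))
      = (Complex.exp (Real.pi * Complex.I * τ / 3) * Complex.exp (2 * Complex.I * (-x + -y)) *
          Complex.exp (2 * Complex.I * z)) *
        ((∑' n : ℤ, T3 (3*z + Real.pi*τ) (3*τ) n) * ∑' p : ℤ×ℤ, Cterm (-x) (-y) τ p) := by
    have step : ∑' q : ℤ×ℤ×ℤ, F (tripEquiv (1, q))
        = ∑' q : ℤ×ℤ×ℤ, (Complex.exp (Real.pi * Complex.I * τ / 3) *
            Complex.exp (2 * Complex.I * (-x + -y)) * Complex.exp (2 * Complex.I * z)) *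
            (T3 (3*z + Real.pi*τ) (3*τ) q.1 * Cterm (-x) (-y) τ q.2) :=
      tsum_congr fun q => by rw [trip_one]; exact pt1 x y z τ q
    rw [step, tsum_mul_left]
    congr 1
    exact (tsum_mul_tsum_of_summable_norm (summable_norm_T3 h3 (3*z + Real.pi*τ))
      (summable_norm_Cterm hτ (-x) (-y))).symm
  have e2 : ∑' q : ℤ×ℤ×ℤ, F (tripEquiv (2, q))
      = (Complex.exp (Real.pi * Complex.I * τ / 3) * Complex.exp (2 * Complex.I * (x + y)) *
          Complex.exp (-2 * Complex.I * z)) *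
        ((∑' n : ℤ, T3 (3*z - Real.pi*τ) (3*τ) n) * ∑' p : ℤ×ℤ, Cterm x y τ p) := by
    have step : ∑' q : ℤ×ℤ×ℤ, F (tripEquiv (2, q))
        = ∑' q : ℤ×ℤ×ℤ, (Complex.exp (Real.pi * Complex.I * τ / 3) *
            Complex.exp (2 * Complex.I * (x + y)) * Complex.exp (-2 * Complex.I * z)) *
            (T3 (3*z - Real.pi*τ) (3*τ) q.1 * Cterm x y τ q.2) :=
      tsum_congr fun q => by rw [trip_two]; exact pt2 x y z τ q
    rw [step, tsum_mul_left]
    congr 1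
    exact (tsum_mul_tsum_of_summable_norm (summable_norm_T3 h3 (3*z - Real.pi*τ))
      (summable_norm_Cterm hτ x y)).symm
  rw [key, split, e0, e1, e2, Afun_eq hτ x y, Cfun_eq hτ (-x) (-y), Cfun_eq hτ x y,
    theta3_eq (3*z) (3*τ), theta3_eq (3*z + Real.pi*τ) (3*τ), theta3_eq (3*z - Real.pi*τ) (3*τ)]
  ring
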